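/- arXiv:1512.04603 — 2 statements merged into one kernel-verified Lean document; each statement's English description precedes it below -/
import Mathlib

section
/- Let A be a 2g×2g integer matrix with det(A - Aᵀ) = ±1. For all v, w ∈ Λ^{2g}, the following exact identity holds in Q = ℚ(t): vᵀ(t-1)(A - tAᵀ)⁻¹w̄ = conj( wᵀ(t-1)(A - tAᵀ)⁻¹v̄ ), where conj is the involution of ℚ(t) sending t to t⁻¹. In particular the Blanchfield pairing of a knot given by this formula is hermitian. -/
open Matrix

set_option maxHeartbeats 2000000
set_option synthInstance.maxHeartbeats 2000000

/-- The variable `t`, i.e. `X`, in the rational function field `Q = ℚ(t)`. -/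
noncomputable def tQ : RatFunc ℚ := RatFunc.X

/-- The involution `t ↦ t⁻¹` of `ℚ(t)`, applied as a function. -/
noncomputable def conjQ : RatFunc ℚ → RatFunc ℚ :=
  RatFunc.eval (algebraMap ℚ (RatFunc ℚ)) tQ⁻¹

/-- The Laurent polynomial ring `Λ = ℤ[t,t⁻¹]`, as a subring of `ℚ(t)`. -/
noncomputable def Lam : Subring (RatFunc ℚ) := Subring.closure {tQ, tQ⁻¹}

lemma transcendental_tQ : Transcendental ℚ tQ := by
  have h : tQ = algebraMap (Polynomial ℚ) (RatFunc ℚ) Polynomial.X := (RatFunc.algebraMap_X).symm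
  rw [h]
  exact (transcendental_algebraMap_iff
    (IsFractionRing.injective (Polynomial ℚ) (RatFunc ℚ))).mpr (Polynomial.transcendental_X ℚ)

lemma transcendental_tQ_inv : Transcendental ℚ (tQ⁻¹) := by
  intro h
  exact transcendental_tQ (IsAlgebraic.inv_iff.mp h)

lemma aeval_tQ_inv_injective :
    Function.Injective (Polynomial.aeval (tQ⁻¹) : Polynomial ℚ →ₐ[ℚ] RatFunc ℚ) :=
  transcendental_iff_injective.mp transcendental_tQ_inv

/-- The involution `t ↦ t⁻¹` as a ring homomorphism on `ℚ(t)`. -/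
noncomputable def phiQ : RatFunc ℚ →+* RatFunc ℚ :=
  IsFractionRing.lift (g := (Polynomial.aeval (tQ⁻¹) : Polynomial ℚ →ₐ[ℚ] RatFunc ℚ).toRingHom)
    aeval_tQ_inv_injective

lemma phiQ_algebraMap (p : Polynomial ℚ) :
    phiQ (algebraMap (Polynomial ℚ) (RatFunc ℚ) p) = Polynomial.aeval (tQ⁻¹) p :=
  IsFractionRing.lift_algebraMap _ _

lemma phiQ_tQ : phiQ tQ = tQ⁻¹ := by
  have h := phiQ_algebraMap Polynomial.X
  rw [Polynomial.aeval_X, RatFunc.algebraMap_X] at h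
  exact h

lemma conjQ_eq_phiQ (x : RatFunc ℚ) : conjQ x = phiQ x := by
  have hx : x = algebraMap (Polynomial ℚ) (RatFunc ℚ) x.num /
      algebraMap (Polynomial ℚ) (RatFunc ℚ) x.denom := (RatFunc.num_div_denom x).symm
  rw [conjQ, RatFunc.eval]
  rw [← Polynomial.aeval_def, ← Polynomial.aeval_def]
  rw [← phiQ_algebraMap, ← phiQ_algebraMap, ← map_div₀]
  rw [← hx]

lemma phiQ_phiQ (x : RatFunc ℚ) : phiQ (phiQ x) = x := by
  have h : (phiQ.comp phiQ) = RingHom.id (RatFunc ℚ) := by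
    apply IsLocalization.ringHom_ext (nonZeroDivisors (Polynomial ℚ))
    apply Polynomial.ringHom_ext
    · intro a
      have key : phiQ (algebraMap (Polynomial ℚ) (RatFunc ℚ) (Polynomial.C a)) =
          algebraMap (Polynomial ℚ) (RatFunc ℚ) (Polynomial.C a) := by
        rw [phiQ_algebraMap, Polynomial.aeval_C,
          IsScalarTower.algebraMap_apply ℚ (Polynomial ℚ) (RatFunc ℚ), Polynomial.algebraMap_eq]
      simp only [RingHom.comp_apply, RingHom.id_apply, key]
    · simp only [RingHom.comp_apply, RingHom.id_apply, RatFunc.algebraMap_X]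
      have hX : (RatFunc.X : RatFunc ℚ) = tQ := rfl
      rw [hX, phiQ_tQ, map_inv₀, phiQ_tQ, inv_inv]
  exact DFunLike.congr_fun h x

lemma tQ_ne_zero : tQ ≠ 0 := RatFunc.X_ne_zero

theorem blanchfield_pairing_hermitian_on_the_nose (g : ℕ)
    (A : Matrix (Fin (2*g)) (Fin (2*g)) ℤ)
    (hA : (A - Aᵀ).det = 1 ∨ (A - Aᵀ).det = -1)
    (A' : Matrix (Fin (2*g)) (Fin (2*g)) (RatFunc ℚ)) (hA' : A' = A.map Int.cast)
    (v w : Fin (2*g) → RatFunc ℚ) (hv : ∀ i, v i ∈ Lam) (hw : ∀ i, w i ∈ Lam) :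
    v ⬝ᵥ ((tQ - 1) • (A' - tQ • A'ᵀ)⁻¹.mulVec (fun i => conjQ (w i))) =
      conjQ (w ⬝ᵥ ((tQ - 1) • (A' - tQ • A'ᵀ)⁻¹.mulVec (fun i => conjQ (v i)))) := by
  classical
  set B : Matrix (Fin (2*g)) (Fin (2*g)) (RatFunc ℚ) := A' - tQ • A'ᵀ with hB_def
  -- the determinant of B is nonzero
  set Cp : Matrix (Fin (2*g)) (Fin (2*g)) (Polynomial ℚ) :=
    A.map (fun k => Polynomial.C (k : ℚ)) -
      (Polynomial.X : Polynomial ℚ) • (A.map (fun k => Polynomial.C (k : ℚ)))ᵀ with hCp_def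
  have hBC : B = Cp.map (algebraMap (Polynomial ℚ) (RatFunc ℚ)) := by
    ext i j
    simp only [hB_def, hCp_def, hA', Matrix.map_apply, Matrix.sub_apply, Matrix.smul_apply,
      Matrix.transpose_apply, map_sub, _root_.map_mul, smul_eq_mul]
    rw [RatFunc.algebraMap_X]
    have h1 : ∀ k : ℤ, algebraMap (Polynomial ℚ) (RatFunc ℚ) (Polynomial.C (k : ℚ)) = (k : (RatFunc ℚ)) := by
      intro k
      rw [RatFunc.algebraMap_C]
      push_cast
      simp
    rw [h1, h1]
    rfl
  have hCpdet : Cp.det ≠ 0 := by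
    intro h0
    have hev : (Polynomial.evalRingHom (1 : ℚ)) Cp.det = ((A - Aᵀ).det : ℚ) := by
      rw [RingHom.map_det, RingHom.mapMatrix_apply]
      have : Cp.map (Polynomial.evalRingHom (1 : ℚ)) = (A - Aᵀ).map (Int.cast : ℤ → ℚ) := by
        ext i j
        simp [hCp_def, Matrix.map_apply, Matrix.sub_apply, Matrix.smul_apply,
          Matrix.transpose_apply]
      rw [this, show (Int.cast : ℤ → ℚ) = ⇑(Int.castRingHom ℚ) from rfl,
        ← RingHom.mapMatrix_apply, ← RingHom.map_det]
    rw [h0] at hev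
    simp only [map_zero] at hev
    rcases hA with h | h <;> rw [h] at hev <;> norm_num at hev
  have hdet : B.det ≠ 0 := by
    rw [hBC, ← RingHom.mapMatrix_apply, ← RingHom.map_det]
    intro h
    exact hCpdet (IsFractionRing.injective (Polynomial ℚ) (RatFunc ℚ) (by simpa using h))
  have hBunit : IsUnit B.det := isUnit_iff_ne_zero.mpr hdet
  -- B.map phiQ = -(tQ⁻¹) • Бᵀ
  have hphiA : ∀ i j, phiQ (A' i j) = A' i j := by
    intro i j
    rw [hA']
    simp only [Matrix.map_apply]
    exact map_intCast phiQ (A i j)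
  have hBmap : B.map phiQ = (-(tQ⁻¹)) • Bᵀ := by
    ext i j
    simp only [hB_def, Matrix.map_apply, Matrix.sub_apply, Matrix.smul_apply,
      Matrix.transpose_apply, map_sub, _root_.map_mul, smul_eq_mul, phiQ_tQ, hphiA]
    rw [neg_mul, mul_sub, ← mul_assoc, inv_mul_cancel₀ tQ_ne_zero, one_mul]
    ring
  -- inverse of B.map phiQ
  haveI : Invertible (-(tQ⁻¹) : (RatFunc ℚ)) := invertibleOfNonzero (by
    simp [tQ_ne_zero])
  have hBmapinv : (B.map phiQ)⁻¹ = (-tQ) • (B⁻¹)ᵀ := by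
    rw [hBmap, Matrix.inv_smul (A := Bᵀ) (-(tQ⁻¹)) (Matrix.isUnit_det_transpose B hBunit),
      invOf_eq_inv,
      ← Matrix.transpose_nonsing_inv]
    congr 1
    rw [inv_neg, inv_inv]
  -- (B⁻¹).map phiQ = (B.map phiQ)⁻¹
  have hinvmap : (B⁻¹).map phiQ = (-tQ) • (B⁻¹)ᵀ := by
    refine Eq.trans (Eq.symm (Matrix.inv_eq_right_inv ?_)) hBmapinv
    rw [← Matrix.map_mul, Matrix.mul_nonsing_inv _ hBunit]
    simp
  -- rewrite conjQ as phiQ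
  have hcw : (fun i => conjQ (w i)) = fun i => phiQ (w i) := by
    funext i; exact conjQ_eq_phiQ _
  have hcv : (fun i => conjQ (v i)) = fun i => phiQ (v i) := by
    funext i; exact conjQ_eq_phiQ _
  rw [hcw, hcv, conjQ_eq_phiQ]
  -- expand the right hand side
  have hdot : ∀ (x y : Fin (2*g) → (RatFunc ℚ)), phiQ (x ⬝ᵥ y) = (fun i => phiQ (x i)) ⬝ᵥ
      (fun i => phiQ (y i)) := by
    intro x y
    simp [dotProduct, map_sum]
  rw [hdot]
  have hsm : (fun i => phiQ (((tQ - 1) • (B⁻¹.mulVec fun i => phiQ (v i))) i)) =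
      (tQ⁻¹ - 1) • ((B⁻¹).map phiQ).mulVec (fun i => phiQ (phiQ (v i))) := by
    funext i
    simp only [Pi.smul_apply, smul_eq_mul, _root_.map_mul, _root_.map_sub, phiQ_tQ, _root_.map_one]
    congr 1
    rw [RingHom.map_mulVec phiQ]
    rfl
  rw [hsm]
  simp only [phiQ_phiQ]
  rw [hinvmap]
  -- now pure matrix algebra
  have hscal : (tQ⁻¹ - 1) • ((-tQ) • (B⁻¹)ᵀ).mulVec v = (tQ - 1) • ((B⁻¹)ᵀ.mulVec v) := by
    rw [Matrix.smul_mulVec, smul_smul]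
    congr 1
    rw [sub_mul, mul_neg, mul_neg, inv_mul_cancel₀ tQ_ne_zero, one_mul]
    ring
  rw [hscal]
  rw [dotProduct_smul, dotProduct_smul]
  congr 1
  rw [Matrix.mulVec_transpose, Matrix.dotProduct_mulVec, dotProduct_comm]
end

section
/- Let A be a 2g×2g integer matrix with det(A - Aᵀ) = ±1. Then Λ^{2g} = A·Λ^{2g} + (A - t⁻¹Aᵀ)·Λ^{2g} as Λ = ℤ[t,t⁻¹]-modules. Equivalently, the composition Λ^{2g} → Λ^{2g}/(A - t⁻¹Aᵀ)Λ^{2g} of multiplication by A with the quotient map is surjective. -/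
open Matrix

set_option maxHeartbeats 2000000
set_option synthInstance.maxHeartbeats 2000000

lemma tQ_mem_Lam : tQ ∈ Lam := Subring.subset_closure (by simp)

theorem iota_plus_surjective_onto_cokernel (g : ℕ)
    (A : Matrix (Fin (2*g)) (Fin (2*g)) ℤ)
    (hA : (A - Aᵀ).det = 1 ∨ (A - Aᵀ).det = -1)
    (A' : Matrix (Fin (2*g)) (Fin (2*g)) (RatFunc ℚ)) (hA' : A' = A.map Int.cast)
    (w : Fin (2*g) → RatFunc ℚ) (hw : ∀ i, w i ∈ Lam) :
    ∃ u v : Fin (2*g) → RatFunc ℚ, (∀ i, u i ∈ Lam) ∧ (∀ i, v i ∈ Lam) ∧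
      w = A'.mulVec u + (A' - tQ⁻¹ • A'ᵀ).mulVec v := by
  have hdet : IsUnit (A - Aᵀ).det := by
    rcases hA with h | h <;> simp [h, Int.isUnit_iff]
  set B : Matrix (Fin (2*g)) (Fin (2*g)) ℤ := (A - Aᵀ)⁻¹ with hB
  have hinv : (A - Aᵀ) * B = 1 := Matrix.mul_nonsing_inv _ hdet
  set B' : Matrix (Fin (2*g)) (Fin (2*g)) (RatFunc ℚ) := B.map Int.cast with hB'
  have hinv' : (A' - A'ᵀ) * B' = 1 := by
    have h2 := congrArg (Int.castRingHom (RatFunc ℚ)).mapMatrix hinv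
    simp only [_root_.map_mul, _root_.map_one, _root_.map_sub] at h2
    simpa [RingHom.mapMatrix_apply, hA', hB', Matrix.transpose_map] using h2
  set x : Fin (2*g) → RatFunc ℚ := B'.mulVec w with hx
  have hxmem : ∀ i, x i ∈ Lam := by
    intro i
    simp only [hx, Matrix.mulVec, dotProduct]
    apply Subring.sum_mem
    intro j _
    exact mul_mem (by simp [hB', Matrix.map_apply]) (hw j)
  refine ⟨(1 - tQ) • x, tQ • x, ?_, ?_, ?_⟩
  · intro i
    exact mul_mem (sub_mem (one_mem _) tQ_mem_Lam) (hxmem i)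
  · intro i
    exact mul_mem tQ_mem_Lam (hxmem i)
  · have key : (A' - A'ᵀ).mulVec x = w := by
      rw [hx, Matrix.mulVec_mulVec, hinv', Matrix.one_mulVec]
    calc w = (A' - A'ᵀ).mulVec x := key.symm
      _ = A'.mulVec ((1 - tQ) • x) + (A' - tQ⁻¹ • A'ᵀ).mulVec (tQ • x) := by
        rw [Matrix.mulVec_smul, Matrix.mulVec_smul, Matrix.sub_mulVec, Matrix.sub_mulVec,
          Matrix.smul_mulVec]
        funext i
        simp only [Pi.add_apply, Pi.sub_apply, Pi.smul_apply, smul_eq_mul]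
        field_simp [tQ_ne_zero]
        ring
end
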